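/- Let V be a finite-dimensional complex vector space of dimension n and W a finite subgroup of GL(V) such that W is generated by its reflections Ref(W) = {s ∈ W : cod(s) = 1}, and such that V^W = {v ∈ V : w v = v for all w ∈ W} = 0. Then for every integer r with 0 ≤ r ≤ n, one has Z(ℂW) ∩ F_r(ℂW) = Σ_U Tr_{W_U}^W( Z(ℂW_U) ), where the sum runs over all linear subspaces U ⊆ V whose pointwise stabilizer W_U = {w ∈ W : w u = u for all u ∈ U} satisfies dim_ℂ V − dim_ℂ V^{W_U} = r. -/

import Mathlib

/-- The fixed subspace `V^w = {v ∈ V | w v = v}` of an element `w` of a subgroup `W` of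
`GL(V)`. -/
noncomputable def fixedSpace {V : Type*} [AddCommGroup V] [Module ℂ V]
    (W : Subgroup (V →ₗ[ℂ] V)ˣ) (w : W) : Submodule ℂ V :=
  LinearMap.eqLocus ((w : (V →ₗ[ℂ] V)ˣ) : V →ₗ[ℂ] V) LinearMap.id

/-- `cod(w) = dim V − dim V^w`. -/
noncomputable def cod {V : Type*} [AddCommGroup V] [Module ℂ V]
    (W : Subgroup (V →ₗ[ℂ] V)ˣ) (w : W) : ℕ :=
  Module.finrank ℂ V - Module.finrank ℂ (fixedSpace W w)

/-- `F_i(ℂW)`: the ℂ-span in the group algebra `ℂW` of the group elements `w` with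
`cod(w) ≤ i`. -/
noncomputable def filt {V : Type*} [AddCommGroup V] [Module ℂ V]
    (W : Subgroup (V →ₗ[ℂ] V)ˣ) (i : ℕ) : Submodule ℂ (MonoidAlgebra ℂ W) :=
  Submodule.span ℂ {x | ∃ w : W, cod W w ≤ i ∧ x = MonoidAlgebra.of ℂ W w}

/-- The pointwise stabilizer `W_U = {w ∈ W | ∀ u ∈ U, w u = u}` of a subspace `U ⊆ V`. -/
def fixator {V : Type*} [AddCommGroup V] [Module ℂ V]
    (W : Subgroup (V →ₗ[ℂ] V)ˣ) (U : Submodule ℂ V) : Subgroup W where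
  carrier := {w : W | ∀ u ∈ U, ((w : (V →ₗ[ℂ] V)ˣ) : V →ₗ[ℂ] V) u = u}
  one_mem' := by intro u hu; simp
  mul_mem' := by
    intro a b ha hb u hu
    simp only [Subgroup.coe_mul, Units.val_mul, Module.End.mul_apply]
    rw [hb u hu, ha u hu]
  inv_mem' := by
    intro a ha u hu
    conv_lhs => rw [← ha u hu]
    rw [← Module.End.mul_apply, ← Units.val_mul, ← Subgroup.coe_mul, inv_mul_cancel]
    simp

/-- The fixed subspace `V^H = {v ∈ V | ∀ w ∈ H, w v = v}` of a subgroup `H ≤ W`. -/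
noncomputable def groupFixed {V : Type*} [AddCommGroup V] [Module ℂ V]
    (W : Subgroup (V →ₗ[ℂ] V)ˣ) (H : Subgroup W) : Submodule ℂ V :=
  ⨅ w : H, fixedSpace W (w : W)

/-- The truncated induction (transfer) map `Tr_H^W : ℂW → ℂW`,
`z ↦ (1/|H|) Σ_{g ∈ W} g z g⁻¹`, as a ℂ-linear endomorphism of `ℂW`. -/
noncomputable def TrMap {V : Type*} [AddCommGroup V] [Module ℂ V]
    (W : Subgroup (V →ₗ[ℂ] V)ˣ) [Fintype W] (H : Subgroup W) :
    MonoidAlgebra ℂ W →ₗ[ℂ] MonoidAlgebra ℂ W :=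
  (Nat.card H : ℂ)⁻¹ •
    ∑ g : W,
      (LinearMap.mulLeft ℂ (MonoidAlgebra.of ℂ W g)).comp
        (LinearMap.mulRight ℂ (MonoidAlgebra.of ℂ W g⁻¹))

/-- The inclusion `ℂH → ℂW` of group algebras induced by the inclusion of a subgroup
`H ≤ W`. -/
noncomputable def subgroupAlgebraIncl {V : Type*} [AddCommGroup V] [Module ℂ V]
    (W : Subgroup (V →ₗ[ℂ] V)ˣ) (H : Subgroup W) :
    MonoidAlgebra ℂ H →ₐ[ℂ] MonoidAlgebra ℂ W :=
  MonoidAlgebra.mapDomainAlgHom ℂ ℂ H.subtype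

section Helpers

open Module MonoidAlgebra

variable {V : Type*} [AddCommGroup V] [Module ℂ V] {W : Subgroup (V →ₗ[ℂ] V)ˣ}

lemma mem_fixedSpace {w : W} {v : V} :
    v ∈ fixedSpace W w ↔ ((w : (V →ₗ[ℂ] V)ˣ) : V →ₗ[ℂ] V) v = v := Iff.rfl

lemma mem_fixator {U : Submodule ℂ V} {w : W} :
    w ∈ fixator W U ↔ ∀ u ∈ U, ((w : (V →ₗ[ℂ] V)ˣ) : V →ₗ[ℂ] V) u = u := Iff.rfl

lemma mem_groupFixed {H : Subgroup W} {v : V} :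
    v ∈ groupFixed W H ↔ ∀ h : H, (((h : W) : (V →ₗ[ℂ] V)ˣ) : V →ₗ[ℂ] V) v = v := by
  unfold groupFixed
  rw [Submodule.mem_iInf]
  exact Iff.rfl

lemma le_groupFixed_fixator (U : Submodule ℂ V) :
    U ≤ groupFixed W (fixator W U) := by
  intro u hu
  rw [mem_groupFixed]
  exact fun h => h.2 u hu

lemma fixator_le_fixator_of_le {U U₂ : Submodule ℂ V}
    (h : U₂ ≤ groupFixed W (fixator W U)) : fixator W U ≤ fixator W U₂ := by
  intro w hw u hu
  exact (mem_groupFixed.mp (h hu)) ⟨w, hw⟩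

lemma groupFixed_anti {H K : Subgroup W} (h : H ≤ K) :
    groupFixed W K ≤ groupFixed W H :=
  le_iInf fun w => iInf_le (fun k : K => fixedSpace W (k : W)) ⟨(w : W), h w.2⟩

lemma groupFixed_le_fixedSpace {H : Subgroup W} {h : W} (hh : h ∈ H) :
    groupFixed W H ≤ fixedSpace W h :=
  iInf_le (fun k : H => fixedSpace W (k : W)) ⟨h, hh⟩

lemma mem_fixator_fixedSpace (w : W) : w ∈ fixator W (fixedSpace W w) :=
  fun _ hu => hu

lemma groupFixed_fixator_fixedSpace (w : W) :
    groupFixed W (fixator W (fixedSpace W w)) = fixedSpace W w :=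
  le_antisymm (groupFixed_le_fixedSpace (mem_fixator_fixedSpace w))
    (le_groupFixed_fixator _)

lemma finrank_fixedSpace_conj (g w : W) :
    Module.finrank ℂ (fixedSpace W (g * w * g⁻¹)) = Module.finrank ℂ (fixedSpace W w) := by
  set a : (V →ₗ[ℂ] V)ˣ := (g : (V →ₗ[ℂ] V)ˣ) with ha
  have h1 : ((a : V →ₗ[ℂ] V).comp ((a⁻¹ : (V →ₗ[ℂ] V)ˣ) : V →ₗ[ℂ] V)) = LinearMap.id := by
    rw [← Module.End.mul_eq_comp, Units.mul_inv]; rfl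
  have h2 : (((a⁻¹ : (V →ₗ[ℂ] V)ˣ) : V →ₗ[ℂ] V).comp (a : V →ₗ[ℂ] V)) = LinearMap.id := by
    rw [← Module.End.mul_eq_comp, Units.inv_mul]; rfl
  let e : V ≃ₗ[ℂ] V := LinearEquiv.ofLinear (a : V →ₗ[ℂ] V)
    ((a⁻¹ : (V →ₗ[ℂ] V)ˣ) : V →ₗ[ℂ] V) h1 h2
  have key : fixedSpace W (g * w * g⁻¹) = (fixedSpace W w).map (e : V →ₗ[ℂ] V) := by
    ext v
    rw [mem_fixedSpace, Submodule.mem_map]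
    have hcoe : (((g * w * g⁻¹ : W) : (V →ₗ[ℂ] V)ˣ) : V →ₗ[ℂ] V)
        = (a : V →ₗ[ℂ] V) * ((w : (V →ₗ[ℂ] V)ˣ) : V →ₗ[ℂ] V)
          * ((a⁻¹ : (V →ₗ[ℂ] V)ˣ) : V →ₗ[ℂ] V) := by
      push_cast [Subgroup.coe_mul, Subgroup.coe_inv, Units.val_mul]
      rfl
    set A : V →ₗ[ℂ] V := (a : V →ₗ[ℂ] V)
    set B : V →ₗ[ℂ] V := ((w : (V →ₗ[ℂ] V)ˣ) : V →ₗ[ℂ] V)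
    set C : V →ₗ[ℂ] V := ((a⁻¹ : (V →ₗ[ℂ] V)ˣ) : V →ₗ[ℂ] V)
    have hCA : ∀ x, C (A x) = x := fun x => by
      have := LinearMap.congr_fun h2 x; simpa using this
    have hAC : ∀ x, A (C x) = x := fun x => by
      have := LinearMap.congr_fun h1 x; simpa using this
    rw [hcoe]
    constructor
    · intro hv
      refine ⟨C v, ?_, ?_⟩
      · rw [mem_fixedSpace]
        have : C (A (B (C v))) = C v := by
          rw [show A (B (C v)) = v from by simpa [Module.End.mul_apply] using hv]
        rwa [hCA] at this
      · show A (C v) = v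
        exact hAC v
    · rintro ⟨u, hu, rfl⟩
      rw [mem_fixedSpace] at hu
      show A (B (C (e u))) = e u
      have he : (e u : V) = A u := rfl
      rw [he, hCA, hu]
  rw [key]
  exact LinearEquiv.finrank_map_eq e (fixedSpace W w)

lemma cod_conj (g w : W) : cod W (g * w * g⁻¹) = cod W w := by
  unfold cod; rw [finrank_fixedSpace_conj]

section GroupAlg

variable {G : Type*} [Group G]

lemma mem_center_of_commute_of (x : MonoidAlgebra ℂ G)
    (h : ∀ g : G, MonoidAlgebra.of ℂ G g * x = x * MonoidAlgebra.of ℂ G g) :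
    x ∈ Subalgebra.center ℂ (MonoidAlgebra ℂ G) := by
  rw [Subalgebra.mem_center_iff]
  intro y
  induction y using MonoidAlgebra.induction_on with
  | of g => exact h g
  | add f g hf hg => rw [add_mul, mul_add, hf, hg]
  | smul r f hf => rw [smul_mul_assoc, mul_smul_comm, hf]

lemma conjSum_mem_center [Fintype G] (x : MonoidAlgebra ℂ G) :
    (∑ g : G, MonoidAlgebra.of ℂ G g * x * MonoidAlgebra.of ℂ G g⁻¹)
      ∈ Subalgebra.center ℂ (MonoidAlgebra ℂ G) := by
  apply mem_center_of_commute_of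
  intro u
  rw [Finset.mul_sum, Finset.sum_mul]
  have key : ∀ g : G, MonoidAlgebra.of ℂ G u * (MonoidAlgebra.of ℂ G g * x * MonoidAlgebra.of ℂ G g⁻¹)
      = (MonoidAlgebra.of ℂ G (u * g) * x * MonoidAlgebra.of ℂ G (u * g)⁻¹) * MonoidAlgebra.of ℂ G u := by
    intro g
    calc MonoidAlgebra.of ℂ G u * (MonoidAlgebra.of ℂ G g * x * MonoidAlgebra.of ℂ G g⁻¹)
        = MonoidAlgebra.of ℂ G (u * g) * x * MonoidAlgebra.of ℂ G g⁻¹ := by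
          simp only [map_mul, mul_assoc]
      _ = MonoidAlgebra.of ℂ G (u * g) * x * (MonoidAlgebra.of ℂ G (u * g)⁻¹ * MonoidAlgebra.of ℂ G u) := by
          rw [← map_mul, mul_inv_rev, inv_mul_cancel_right]
      _ = (MonoidAlgebra.of ℂ G (u * g) * x * MonoidAlgebra.of ℂ G (u * g)⁻¹) * MonoidAlgebra.of ℂ G u := by
          simp [mul_assoc]
  calc ∑ g : G, MonoidAlgebra.of ℂ G u * (MonoidAlgebra.of ℂ G g * x * MonoidAlgebra.of ℂ G g⁻¹)
      = ∑ g : G, (MonoidAlgebra.of ℂ G (u * g) * x * MonoidAlgebra.of ℂ G (u * g)⁻¹) * MonoidAlgebra.of ℂ G u :=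
        Finset.sum_congr rfl fun g _ => key g
    _ = ∑ g : G, (MonoidAlgebra.of ℂ G g * x * MonoidAlgebra.of ℂ G g⁻¹) * MonoidAlgebra.of ℂ G u :=
        Equiv.sum_comp (Equiv.mulLeft u)
          (fun g => (MonoidAlgebra.of ℂ G g * x * MonoidAlgebra.of ℂ G g⁻¹) * MonoidAlgebra.of ℂ G u)

end GroupAlg

lemma TrMap_apply [Fintype W] (H : Subgroup W) (x : MonoidAlgebra ℂ W) :
    TrMap W H x = (Nat.card H : ℂ)⁻¹ •
      ∑ g : W, MonoidAlgebra.of ℂ W g * x * MonoidAlgebra.of ℂ W g⁻¹ := by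
  simp [TrMap, mul_assoc]

lemma incl_of (H : Subgroup W) (h : H) :
    subgroupAlgebraIncl W H (MonoidAlgebra.of ℂ H h) = MonoidAlgebra.of ℂ W (h : W) := by
  simp [subgroupAlgebraIncl, MonoidAlgebra.of_apply, Finsupp.mapDomain_single]

lemma of_mem_filt {i : ℕ} {w : W} (h : cod W w ≤ i) :
    MonoidAlgebra.of ℂ W w ∈ filt W i :=
  Submodule.subset_span ⟨w, h, rfl⟩

lemma conj_mem_filt {i : ℕ} (g : W) {x : MonoidAlgebra ℂ W} (hx : x ∈ filt W i) :
    MonoidAlgebra.of ℂ W g * x * MonoidAlgebra.of ℂ W g⁻¹ ∈ filt W i := by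
  induction hx using Submodule.span_induction with
  | mem y hy =>
    obtain ⟨w, hw, rfl⟩ := hy
    have : MonoidAlgebra.of ℂ W g * MonoidAlgebra.of ℂ W w * MonoidAlgebra.of ℂ W g⁻¹
        = MonoidAlgebra.of ℂ W (g * w * g⁻¹) := by simp [map_mul]
    rw [this]
    exact of_mem_filt (by rw [cod_conj]; exact hw)
  | zero => simp only [mul_zero, zero_mul]; exact zero_mem _
  | add x y hx hy hx' hy' => rw [mul_add, add_mul]; exact add_mem hx' hy'
  | smul a x hx hx' => rw [mul_smul_comm, smul_mul_assoc]; exact Submodule.smul_mem _ _ hx'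

lemma TrMap_mem_filt [Fintype W] (H : Subgroup W) {i : ℕ} {x : MonoidAlgebra ℂ W}
    (hx : x ∈ filt W i) : TrMap W H x ∈ filt W i := by
  rw [TrMap_apply]
  exact Submodule.smul_mem _ _ (Submodule.sum_mem _ fun g _ => conj_mem_filt g hx)

lemma TrMap_mem_center [Fintype W] (H : Subgroup W) (x : MonoidAlgebra ℂ W) :
    TrMap W H x ∈ Subalgebra.center ℂ (MonoidAlgebra ℂ W) := by
  rw [TrMap_apply]
  exact Subalgebra.smul_mem _ (conjSum_mem_center x) _

lemma incl_mem_filt (H : Subgroup W) {i : ℕ} (hH : ∀ h : H, cod W (h : W) ≤ i)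
    (z : MonoidAlgebra ℂ H) : subgroupAlgebraIncl W H z ∈ filt W i := by
  induction z using MonoidAlgebra.induction_on with
  | of h => rw [incl_of]; exact of_mem_filt (hH h)
  | add f g hf hg => rw [map_add]; exact add_mem hf hg
  | smul r f hf => rw [map_smul]; exact Submodule.smul_mem _ _ hf

lemma TrMap_incl_conjSum [Fintype W] (H : Subgroup W) [Fintype H] (w : W) (hw : w ∈ H) :
    TrMap W H (subgroupAlgebraIncl W H
        (∑ h : H, MonoidAlgebra.of ℂ H h * MonoidAlgebra.of ℂ H (⟨w, hw⟩ : H)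
          * MonoidAlgebra.of ℂ H h⁻¹))
      = ∑ g : W, MonoidAlgebra.of ℂ W g * MonoidAlgebra.of ℂ W w * MonoidAlgebra.of ℂ W g⁻¹ := by
  have hincl : subgroupAlgebraIncl W H
      (∑ h : H, MonoidAlgebra.of ℂ H h * MonoidAlgebra.of ℂ H (⟨w, hw⟩ : H)
        * MonoidAlgebra.of ℂ H h⁻¹)
      = ∑ h : H, MonoidAlgebra.of ℂ W (h : W) * MonoidAlgebra.of ℂ W w
          * MonoidAlgebra.of ℂ W ((h : W))⁻¹ := by
    rw [map_sum]
    refine Finset.sum_congr rfl fun h _ => ?_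
    rw [map_mul, map_mul, incl_of, incl_of, incl_of]
    norm_cast
  rw [hincl, TrMap_apply]
  have step : ∀ g : W,
      MonoidAlgebra.of ℂ W g *
        (∑ h : H, MonoidAlgebra.of ℂ W (h : W) * MonoidAlgebra.of ℂ W w
          * MonoidAlgebra.of ℂ W ((h : W))⁻¹) * MonoidAlgebra.of ℂ W g⁻¹
      = ∑ h : H, MonoidAlgebra.of ℂ W (g * (h : W)) * MonoidAlgebra.of ℂ W w
          * MonoidAlgebra.of ℂ W (g * (h : W))⁻¹ := by
    intro g
    rw [Finset.mul_sum, Finset.sum_mul]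
    refine Finset.sum_congr rfl fun h _ => ?_
    simp only [← map_mul]
    congr 1
  rw [Finset.sum_congr rfl fun g _ => step g, Finset.sum_comm]
  have reindex : ∀ h : H,
      (∑ g : W, MonoidAlgebra.of ℂ W (g * (h : W)) * MonoidAlgebra.of ℂ W w
        * MonoidAlgebra.of ℂ W (g * (h : W))⁻¹)
      = ∑ g : W, MonoidAlgebra.of ℂ W g * MonoidAlgebra.of ℂ W w * MonoidAlgebra.of ℂ W g⁻¹ := by
    intro h
    exact Equiv.sum_comp (Equiv.mulRight (h : W))
      (fun g => MonoidAlgebra.of ℂ W g * MonoidAlgebra.of ℂ W w * MonoidAlgebra.of ℂ W g⁻¹)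
  rw [Finset.sum_congr rfl fun h _ => reindex h, Finset.sum_const, Finset.card_univ,
    ← Nat.cast_smul_eq_nsmul ℂ, smul_smul, Nat.card_eq_fintype_card,
    inv_mul_cancel₀ (Nat.cast_ne_zero.mpr (Fintype.card_pos_iff.mpr ⟨1⟩).ne'), one_smul]


section Parabolic

variable [FiniteDimensional ℂ V]

lemma exists_reflection (hrefl : Subgroup.closure {s : W | cod W s = 1} = ⊤)
    (hfix : groupFixed W ⊤ = ⊥) {U' : Submodule ℂ V}
    (h : 0 < Module.finrank ℂ U') :
    ∃ s : W, cod W s = 1 ∧ ¬ U' ≤ fixedSpace W s := by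
  by_contra hc
  push_neg at hc
  have h1 : {s : W | cod W s = 1} ⊆ (fixator W U' : Set W) := by
    intro s hs
    exact fun u hu => (hc s hs) hu
  have h2 : fixator W U' = ⊤ :=
    top_unique (hrefl ▸ (Subgroup.closure_le _).mpr h1)
  have h3 : U' ≤ ⊥ := by
    have h4 := le_groupFixed_fixator (W := W) U'
    rwa [h2, hfix] at h4
  rw [le_bot_iff.mp h3, finrank_bot] at h
  exact lt_irrefl 0 h

lemma descend (hrefl : Subgroup.closure {s : W | cod W s = 1} = ⊤)
    (hfix : groupFixed W ⊤ = ⊥) (U : Submodule ℂ V)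
    (h : 0 < Module.finrank ℂ (groupFixed W (fixator W U))) :
    ∃ U₂ : Submodule ℂ V, fixator W U ≤ fixator W U₂ ∧
      Module.finrank ℂ (groupFixed W (fixator W U₂)) + 1
        = Module.finrank ℂ (groupFixed W (fixator W U)) := by
  set U' := groupFixed W (fixator W U) with hU'
  obtain ⟨s, hs1, hs2⟩ := exists_reflection hrefl hfix h
  have hVsle := Submodule.finrank_le (fixedSpace W s)
  have hVs : Module.finrank ℂ (fixedSpace W s) + 1 = Module.finrank ℂ V := by
    unfold cod at hs1; omega
  refine ⟨U' ⊓ fixedSpace W s, fixator_le_fixator_of_le inf_le_left, ?_⟩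
  have hsU₂ : s ∈ fixator W (U' ⊓ fixedSpace W s) := fun u hu => hu.2
  have hP : groupFixed W (fixator W (U' ⊓ fixedSpace W s)) = U' ⊓ fixedSpace W s :=
    le_antisymm
      (le_inf (groupFixed_anti (fixator_le_fixator_of_le inf_le_left))
        (groupFixed_le_fixedSpace hsU₂))
      (le_groupFixed_fixator _)
  rw [hP]
  have hlt : fixedSpace W s < U' ⊔ fixedSpace W s :=
    lt_of_le_of_ne le_sup_right (fun heq => hs2 (heq ▸ le_sup_left))
  have h4 := Submodule.finrank_lt_finrank_of_lt hlt
  have h5 := Submodule.finrank_le (U' ⊔ fixedSpace W s)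
  have hsup : U' ⊔ fixedSpace W s = ⊤ :=
    Submodule.eq_top_of_finrank_eq (by omega)
  have h6 := Submodule.finrank_sup_add_finrank_inf_eq U' (fixedSpace W s)
  rw [hsup, finrank_top] at h6
  omega

lemma exists_parabolic (hrefl : Subgroup.closure {s : W | cod W s = 1} = ⊤)
    (hfix : groupFixed W ⊤ = ⊥) {r : ℕ} (hr : r ≤ Module.finrank ℂ V)
    (w : W) (hw : cod W w ≤ r) :
    ∃ U : Submodule ℂ V, w ∈ fixator W U ∧
      Module.finrank ℂ V - Module.finrank ℂ (groupFixed W (fixator W U)) = r := by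
  have aux : ∀ (m : ℕ) (U : Submodule ℂ V), w ∈ fixator W U →
      Module.finrank ℂ (groupFixed W (fixator W U)) = (Module.finrank ℂ V - r) + m →
      ∃ U' : Submodule ℂ V, w ∈ fixator W U' ∧
        Module.finrank ℂ V - Module.finrank ℂ (groupFixed W (fixator W U')) = r := by
    intro m
    induction m with
    | zero => exact fun U hwU hd => ⟨U, hwU, by omega⟩
    | succ m ih =>
      intro U hwU hd
      obtain ⟨U₂, hle, hd₂⟩ := descend hrefl hfix U (by omega)
      exact ih U₂ (hle hwU) (by omega)
  have h1 := Submodule.finrank_le (fixedSpace W w)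
  refine aux (Module.finrank ℂ (fixedSpace W w) - (Module.finrank ℂ V - r))
    (fixedSpace W w) (mem_fixator_fixedSpace w) ?_
  rw [groupFixed_fixator_fixedSpace]
  unfold cod at hw
  omega

end Parabolic

end Helpers

/-- For a reflection group `W ≤ GL(V)` (generated by its reflections, with `V^W = 0`)
and `0 ≤ r ≤ n = dim V`, one has
`Z(ℂW) ∩ F_r(ℂW) = Σ_{W'} Tr_{W'}^W(Z(ℂW'))`, the sum running over the parabolic
subgroups `W' = W_U` (for subspaces `U ⊆ V`) with `dim V − dim V^{W'} = r`. -/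
theorem center_filt_eq_sup_traces_of_parabolics
    (V : Type*) [AddCommGroup V] [Module ℂ V] [FiniteDimensional ℂ V]
    (W : Subgroup (V →ₗ[ℂ] V)ˣ) [Fintype W]
    (hrefl : Subgroup.closure {s : W | cod W s = 1} = ⊤)
    (hfix : groupFixed W ⊤ = ⊥)
    (r : ℕ) (hr : r ≤ Module.finrank ℂ V) :
    Subalgebra.toSubmodule (Subalgebra.center ℂ (MonoidAlgebra ℂ W)) ⊓ filt W r
      = ⨆ (U : Submodule ℂ V)
          (_ : Module.finrank ℂ V - Module.finrank ℂ (groupFixed W (fixator W U)) = r),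
          Submodule.map (TrMap W (fixator W U))
            (Submodule.map (subgroupAlgebraIncl W (fixator W U)).toLinearMap
              (Subalgebra.toSubmodule
                (Subalgebra.center ℂ (MonoidAlgebra ℂ (fixator W U))))) := by
  classical
  apply le_antisymm
  · rintro x hx
    rw [Submodule.mem_inf] at hx
    obtain ⟨hxc, hxf⟩ := hx
    rw [Subalgebra.mem_toSubmodule] at hxc
    have keyT : ∀ w : W, cod W w ≤ r →
        (∑ g : W, MonoidAlgebra.of ℂ W g * MonoidAlgebra.of ℂ W w * MonoidAlgebra.of ℂ W g⁻¹)
          ∈ ⨆ (U : Submodule ℂ V)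
              (_ : Module.finrank ℂ V - Module.finrank ℂ (groupFixed W (fixator W U)) = r),
              Submodule.map (TrMap W (fixator W U))
                (Submodule.map (subgroupAlgebraIncl W (fixator W U)).toLinearMap
                  (Subalgebra.toSubmodule
                    (Subalgebra.center ℂ (MonoidAlgebra ℂ (fixator W U))))) := by
      intro w hcod
      obtain ⟨U, hwU, hU⟩ := exists_parabolic hrefl hfix hr w hcod
      haveI : Fintype (fixator W U) := Fintype.ofFinite _
      apply Submodule.mem_iSup_of_mem U
      apply Submodule.mem_iSup_of_mem hU
      rw [← TrMap_incl_conjSum (fixator W U) w hwU]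
      apply Submodule.mem_map_of_mem
      apply Submodule.mem_map_of_mem
      rw [Subalgebra.mem_toSubmodule]
      exact conjSum_mem_center _
    let A : MonoidAlgebra ℂ W →ₗ[ℂ] MonoidAlgebra ℂ W :=
      ∑ g : W, (LinearMap.mulLeft ℂ (MonoidAlgebra.of ℂ W g)).comp
        (LinearMap.mulRight ℂ (MonoidAlgebra.of ℂ W g⁻¹))
    have hA : ∀ y, A y = ∑ g : W, MonoidAlgebra.of ℂ W g * y * MonoidAlgebra.of ℂ W g⁻¹ := by
      intro y; simp [A, mul_assoc]
    have hAx : ∀ y ∈ Submodule.span ℂ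
        {y | ∃ w : W, cod W w ≤ r ∧ y = MonoidAlgebra.of ℂ W w},
        A y ∈ ⨆ (U : Submodule ℂ V)
        (_ : Module.finrank ℂ V - Module.finrank ℂ (groupFixed W (fixator W U)) = r),
        Submodule.map (TrMap W (fixator W U))
          (Submodule.map (subgroupAlgebraIncl W (fixator W U)).toLinearMap
            (Subalgebra.toSubmodule
              (Subalgebra.center ℂ (MonoidAlgebra ℂ (fixator W U))))) := by
      intro y hy
      induction hy using Submodule.span_induction with
      | mem y hy =>
        obtain ⟨w, hw, rfl⟩ := hy
        rw [hA]
        exact keyT w hw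
      | zero => rw [map_zero]; exact zero_mem _
      | add y z hy hz hy' hz' => rw [map_add]; exact add_mem hy' hz'
      | smul a y hy hy' => rw [map_smul]; exact Submodule.smul_mem _ _ hy'
    have hconj : ∀ g : W,
        MonoidAlgebra.of ℂ W g * x * MonoidAlgebra.of ℂ W g⁻¹ = x := by
      intro g
      have hcomm := Subalgebra.mem_center_iff.mp hxc (MonoidAlgebra.of ℂ W g)
      rw [hcomm, mul_assoc, ← map_mul, mul_inv_cancel, map_one, mul_one]
    have hxA : x = (Fintype.card W : ℂ)⁻¹ • A x := by
      rw [hA, Finset.sum_congr rfl fun g _ => hconj g, Finset.sum_const, Finset.card_univ,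
        ← Nat.cast_smul_eq_nsmul ℂ, smul_smul,
        inv_mul_cancel₀ (Nat.cast_ne_zero.mpr (Fintype.card_pos_iff.mpr ⟨1⟩).ne'), one_smul]
    rw [hxA]
    exact Submodule.smul_mem _ _ (hAx x hxf)
  · apply iSup_le
    intro U
    apply iSup_le
    intro hU
    rintro x hx
    rw [Submodule.mem_map] at hx
    obtain ⟨y, hy, rfl⟩ := hx
    rw [Submodule.mem_map] at hy
    obtain ⟨z, hz, rfl⟩ := hy
    rw [Submodule.mem_inf]
    refine ⟨?_, ?_⟩
    · rw [Subalgebra.mem_toSubmodule]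
      exact TrMap_mem_center _ _
    · apply TrMap_mem_filt
      apply incl_mem_filt
      intro h
      have h1 : groupFixed W (fixator W U) ≤ fixedSpace W (h : W) :=
        groupFixed_le_fixedSpace h.2
      have h2 := Submodule.finrank_mono h1
      have h3 := Submodule.finrank_le (fixedSpace W (h : W))
      unfold cod
      omega
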